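/- Let f be a non-zero vector of a metric vector space (V,Q) such that f ∈ V^⊥ and Q(f) = 0. Then ΔO(V,Q,f) = Δ(V,f) and ΔO'(V,Q,f) = {δ_{a*,f} : a* ∈ (V^⊥)°}, where (V^⊥)° := {a* ∈ V* : ⟨a*,x⟩ = 0 for all x ∈ V^⊥} is the annihilator of the radical. -/

import Mathlib

/-! Setting: a field `F`, a finite-dimensional `F`-vector space `V`, a quadratic form
`Q : V → F` with polar form `B = QuadraticMap.polar Q` (the bilinear map `Q.polarBilin`),
induced map `D = Q.polarBilin : V →ₗ[F] Module.Dual F V`, and radical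
`V^⊥ = LinearMap.ker Q.polarBilin`. -/

variable {F V : Type*} [Field F] [AddCommGroup V] [Module F V] [FiniteDimensional F V]

/-- The map `δ_{c*,f} : x ↦ x + ⟨c*,x⟩ • f`. -/
def deltaMap (c : Module.Dual F V) (f : V) : V →ₗ[F] V :=
  LinearMap.id + c.smulRight f

/-- The orthogonal group `O(V,Q)`, as a set of linear endomorphisms. -/
def orthSet (Q : QuadraticForm F V) : Set (V →ₗ[F] V) :=
  {φ | Function.Bijective φ ∧ ∀ x, Q (φ x) = Q x}

/-- The weak orthogonal group `O'(V,Q)`: isometries fixing the radical elementwise. -/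
def wOrthSet (Q : QuadraticForm F V) : Set (V →ₗ[F] V) :=
  {φ | Function.Bijective φ ∧ (∀ x, Q (φ x) = Q x) ∧
    ∀ x ∈ LinearMap.ker Q.polarBilin, φ x = x}

/-- The group `Δ(V,f) = {δ_{a*,f} : a* ∈ V*, ⟨a*,f⟩ ≠ -1}`. -/
def deltaSet (f : V) : Set (V →ₗ[F] V) :=
  {φ | ∃ a : Module.Dual F V, a f ≠ -1 ∧ φ = deltaMap a f}

/-- The `Q`-reflection `ξ_r : x ↦ x - Q(r)⁻¹ • B(r,x) • r` in the direction of `r`. -/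
noncomputable def xiMap (Q : QuadraticForm F V) (r : V) : V →ₗ[F] V :=
  LinearMap.id - (Q r)⁻¹ • (Q.polarBilin r).smulRight r


omit [FiniteDimensional F V] in
lemma deltaMap_apply (c : Module.Dual F V) (f : V) (x : V) :
    deltaMap c f x = x + c x • f := rfl

omit [FiniteDimensional F V] in
lemma delta_bijective (a : Module.Dual F V) (f : V) (ha : a f ≠ -1) :
    Function.Bijective (deltaMap a f) := by
  have hc : (1 : F) + a f ≠ 0 := by
    intro h; exact ha (eq_neg_of_add_eq_zero_right h)
  rw [Function.bijective_iff_has_inverse]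
  refine ⟨deltaMap (-(1 + a f)⁻¹ • a) f, fun x => ?_, fun x => ?_⟩ <;>
  · simp only [deltaMap_apply, map_add, map_smul, LinearMap.smul_apply, smul_eq_mul,
      smul_smul]
    match_scalars
    all_goals field_simp
    all_goals ring

omit [FiniteDimensional F V] in
lemma delta_isometry (Q : QuadraticForm F V) (a : Module.Dual F V) (f : V)
    (hfrad : f ∈ LinearMap.ker Q.polarBilin) (hQf : Q f = 0) (x : V) :
    Q (deltaMap a f x) = Q x := by
  have hpol : ∀ y, QuadraticMap.polar Q f y = 0 := by
    intro y
    have : Q.polarBilin f = 0 := hfrad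
    simpa using LinearMap.congr_fun this y
  rw [deltaMap_apply, QuadraticMap.map_add (⇑Q), QuadraticMap.map_smul,
    QuadraticMap.polar_smul_right, QuadraticMap.polar_comm, hpol, hQf]
  simp

/-- Lemma 3.1(d), first part: if `f ∈ V^⊥` and `Q f = 0`, then `ΔO(V,Q,f) = Δ(V,f)` and
`ΔO'(V,Q,f) = {δ_{a*,f} : a* ∈ (V^⊥)°}`, where `(V^⊥)°` is the annihilator of the radical. -/
theorem stmt3 (Q : QuadraticForm F V) (f : V) (hf : f ≠ 0)
    (hfrad : f ∈ LinearMap.ker Q.polarBilin) (hQf : Q f = 0) :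
    deltaSet f ∩ orthSet Q = deltaSet f ∧
    deltaSet f ∩ wOrthSet Q =
      {φ : V →ₗ[F] V | ∃ a : Module.Dual F V,
        (∀ x ∈ LinearMap.ker Q.polarBilin, a x = 0) ∧ φ = deltaMap a f} := by
  constructor
  · rw [Set.inter_eq_left]
    rintro φ ⟨a, ha, rfl⟩
    exact ⟨delta_bijective a f ha, fun x => delta_isometry Q a f hfrad hQf x⟩
  · ext φ
    constructor
    · rintro ⟨⟨a, ha, rfl⟩, -, -, hfix⟩
      refine ⟨a, fun x hx => ?_, rfl⟩
      have := hfix x hx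
      rw [deltaMap_apply, add_eq_left, smul_eq_zero] at this
      tauto
    · rintro ⟨a, hann, rfl⟩
      have haf : a f = 0 := hann f hfrad
      have ha : a f ≠ -1 := by rw [haf]; norm_num
      refine ⟨⟨a, ha, rfl⟩, delta_bijective a f ha,
        fun x => delta_isometry Q a f hfrad hQf x, fun x hx => ?_⟩
      rw [deltaMap_apply, hann x hx, zero_smul, add_zero]
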